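/- arXiv:0902.2514 — 2 statements merged into one kernel-verified Lean document; each statement's English description precedes it below -/
import Mathlib

section
/- For every real number x > 0, the inequality ψ'(x) · e^{ψ(x)} < 1 holds, where ψ is the digamma function and ψ' its derivative (the trigamma function). -/
open Real

/-- The digamma (psi) function, the derivative of `log ∘ Γ`. -/
noncomputable def digamma : ℝ → ℝ :=
  deriv fun x : ℝ => Real.log (Real.Gamma x)

open Filter Topology Set Finset

namespace DigammaAux

/-- The digamma function as an explicit series. -/
noncomputable def psiF (x : ℝ) : ℝ :=
  -Real.eulerMascheroniConstant + (-x⁻¹ + ∑' m : ℕ, (((m : ℝ) + 1)⁻¹ - (x + m + 1)⁻¹))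

/-- The trigamma function as an explicit series. -/
noncomputable def trig (x : ℝ) : ℝ := ∑' n : ℕ, ((x + n) ^ 2)⁻¹

/-- Minus the derivative of trigamma, as an explicit series. -/
noncomputable def tcube (x : ℝ) : ℝ := ∑' n : ℕ, 2 * ((x + n) ^ 3)⁻¹

/-- lower-bound auxiliary function for trigamma -/
noncomputable def h1 (y : ℝ) : ℝ := y⁻¹ + (2 * y ^ 2)⁻¹ + (6 * y ^ 3)⁻¹ - (30 * y ^ 5)⁻¹

/-- upper-bound auxiliary function for `tcube` -/
noncomputable def g0 (y : ℝ) : ℝ := (y ^ 2)⁻¹ + (y ^ 3)⁻¹ + (2 * y ^ 4)⁻¹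

/-- upper-bound auxiliary function for trigamma -/
noncomputable def H0 (y : ℝ) : ℝ := y⁻¹ + (y ^ 2)⁻¹

noncomputable def G (y : ℝ) : ℝ := trig y * Real.exp (psiF y)

lemma summable_inv_sq {x : ℝ} (hx : 0 < x) :
    Summable fun n : ℕ => ((x + n) ^ 2)⁻¹ := by
  have h0 : Summable (fun n : ℕ => ((n : ℝ) ^ 2)⁻¹) := by
    simpa [one_div] using summable_one_div_nat_pow.mpr (by norm_num : 1 < 2)
  have h1 : Summable (fun n : ℕ => (((n : ℝ) + 1) ^ 2)⁻¹) := by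
    have := (summable_nat_add_iff (f := fun n : ℕ => ((n : ℝ) ^ 2)⁻¹) 1).mpr h0
    simpa [Nat.cast_add] using this
  rw [← summable_nat_add_iff 1]
  apply h1.of_nonneg_of_le (fun n => by positivity)
  intro n
  have hn : ((n : ℝ) + 1) ≤ x + (n + 1 : ℕ) := by push_cast; linarith
  have hp : (0:ℝ) < (n : ℝ) + 1 := by positivity
  apply inv_anti₀ (by positivity)
  have : (0:ℝ) ≤ x + (n+1:ℕ) := by push_cast; positivity
  nlinarith

lemma summable_inv_cube {x : ℝ} (hx : 0 < x) :
    Summable fun n : ℕ => 2 * ((x + n) ^ 3)⁻¹ := by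
  have h := (summable_inv_sq hx).mul_left (2 * x⁻¹)
  apply h.of_nonneg_of_le (fun n => by positivity)
  intro n
  have hxn : (0:ℝ) < x + n := by positivity
  rw [mul_assoc]
  apply mul_le_mul_of_nonneg_left _ (by norm_num : (0:ℝ) ≤ 2)
  rw [← mul_inv]
  apply inv_anti₀ (by positivity)
  have : x * (x + n)^2 ≤ (x+n) * (x+n)^2 := by nlinarith [sq_nonneg (x+n)]
  calc x * (x + n)^2 ≤ (x+n)^3 := by nlinarith [sq_nonneg (x+n)]

lemma summable_psi_term {x : ℝ} (hx : 0 < x) :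
    Summable fun m : ℕ => (((m : ℝ) + 1)⁻¹ - (x + m + 1)⁻¹) := by
  have h1 : Summable (fun n : ℕ => (((n : ℝ) + 1) ^ 2)⁻¹) := by
    have h0 : Summable (fun n : ℕ => ((n : ℝ) ^ 2)⁻¹) := by
      simpa [one_div] using summable_one_div_nat_pow.mpr (by norm_num : 1 < 2)
    have := (summable_nat_add_iff (f := fun n : ℕ => ((n : ℝ) ^ 2)⁻¹) 1).mpr h0
    simpa [Nat.cast_add] using this
  apply (h1.mul_left x).of_nonneg_of_le
  · intro m
    have h2 : (0:ℝ) < (m:ℝ) + 1 := by positivity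
    have h3 : (0:ℝ) < x + m + 1 := by positivity
    have : ((m:ℝ)+1) ≤ x + m + 1 := by linarith
    simp only [sub_nonneg]
    exact inv_anti₀ h2 this
  · intro m
    have h2 : (0:ℝ) < (m:ℝ) + 1 := by positivity
    have h3 : (0:ℝ) < x + m + 1 := by positivity
    have key : ((m:ℝ)+1)⁻¹ - (x + m + 1)⁻¹ = x * (((m:ℝ)+1)⁻¹ * (x+m+1)⁻¹) := by
      field_simp; ring
    rw [key, sq, ← mul_inv]
    apply mul_le_mul_of_nonneg_left _ hx.le
    apply inv_anti₀ (by positivity)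
    nlinarith

lemma TUO_add {F G : ℕ → ℝ → ℝ} {f g : ℝ → ℝ} {s : Set ℝ}
    (hF : TendstoUniformlyOn F f atTop s) (hG : TendstoUniformlyOn G g atTop s) :
    TendstoUniformlyOn (fun n y => F n y + G n y) (fun y => f y + g y) atTop s := by
  rw [Metric.tendstoUniformlyOn_iff] at hF hG ⊢
  intro ε hε
  filter_upwards [hF (ε/2) (by linarith), hG (ε/2) (by linarith)] with n h1 h2 y hy
  calc dist (f y + g y) (F n y + G n y) ≤ dist (f y) (F n y) + dist (g y) (G n y) :=
        dist_add_add_le _ _ _ _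
    _ < ε/2 + ε/2 := add_lt_add (h1 y hy) (h2 y hy)
    _ = ε := by ring

lemma TUO_self {h : ℝ → ℝ} {s : Set ℝ} :
    TendstoUniformlyOn (fun _ : ℕ => h) h atTop s := by
  rw [Metric.tendstoUniformlyOn_iff]
  intro ε hε
  filter_upwards with n y _
  simpa using hε

-- summable bound (proved in earlier chunk, restated here for this test file)
lemma summable_sq_shift : Summable (fun n : ℕ => (((n : ℝ) + 1) ^ 2)⁻¹) := by
  have h0 : Summable (fun n : ℕ => ((n : ℝ) ^ 2)⁻¹) := by
    simpa [one_div] using summable_one_div_nat_pow.mpr (by norm_num : 1 < 2)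
  have := (summable_nat_add_iff (f := fun n : ℕ => ((n : ℝ) ^ 2)⁻¹) 1).mpr h0
  simpa [Nat.cast_add] using this

lemma psi_term_bound {y : ℝ} (hy : 0 < y) {b : ℝ} (hyb : y ≤ b) (m : ℕ) :
    ‖((m : ℝ) + 1)⁻¹ - (y + m + 1)⁻¹‖ ≤ b * (((m : ℝ) + 1) ^ 2)⁻¹ := by
  have h2 : (0:ℝ) < (m:ℝ) + 1 := by positivity
  have h3 : (0:ℝ) < y + m + 1 := by positivity
  have hnn : (0:ℝ) ≤ ((m : ℝ) + 1)⁻¹ - (y + m + 1)⁻¹ := by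
    simp only [sub_nonneg]
    exact inv_anti₀ h2 (by linarith)
  rw [Real.norm_eq_abs, abs_of_nonneg hnn]
  have key : ((m:ℝ)+1)⁻¹ - (y + m + 1)⁻¹ = y * (((m:ℝ)+1)⁻¹ * (y+m+1)⁻¹) := by
    field_simp; ring
  rw [key, sq, ← mul_inv]
  calc y * (((m:ℝ)+1) * (y+m+1))⁻¹ ≤ b * (((m:ℝ)+1) * (y+m+1))⁻¹ := by
        apply mul_le_mul_of_nonneg_right hyb (by positivity)
    _ ≤ b * (((m:ℝ)+1) * ((m:ℝ)+1))⁻¹ := by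
        apply mul_le_mul_of_nonneg_left _ (hy.trans_le hyb).le
        apply inv_anti₀ (by positivity)
        nlinarith

lemma tendsto_log_sub_harmonic :
    Tendsto (fun n : ℕ => Real.log n - (harmonic n : ℚ)) atTop
      (𝓝 (-Real.eulerMascheroniConstant)) := by
  have := Real.tendsto_harmonic_sub_log.neg
  simpa [neg_sub] using this

lemma harmonic_cast (n : ℕ) : ((harmonic n : ℚ) : ℝ) = ∑ m ∈ Finset.range n, ((m : ℝ) + 1)⁻¹ := by
  rw [harmonic]
  push_cast
  rfl

-- the derivative of `logGammaSeq · n`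
lemma hasDerivAt_logGammaSeq (n : ℕ) {y : ℝ} (hy : 0 < y) :
    HasDerivAt (fun z => Real.BohrMollerup.logGammaSeq z n)
      ((Real.log n - (harmonic n : ℚ)) +
        (-y⁻¹ + ∑ m ∈ Finset.range n, (((m : ℝ) + 1)⁻¹ - (y + m + 1)⁻¹))) y := by
  have key : HasDerivAt (fun z => Real.BohrMollerup.logGammaSeq z n)
      (Real.log n - ∑ m ∈ Finset.range (n + 1), (y + m)⁻¹) y := by
    unfold Real.BohrMollerup.logGammaSeq
    have h1 : HasDerivAt (fun z : ℝ => z * Real.log n + Real.log (Nat.factorial n))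
        (Real.log n) y := (hasDerivAt_mul_const _).add_const _
    have h2 : HasDerivAt (fun z : ℝ => ∑ m ∈ Finset.range (n + 1), Real.log (z + m))
        (∑ m ∈ Finset.range (n + 1), (y + m)⁻¹) y := by
      apply HasDerivAt.fun_sum
      intro m _
      have hym : y + (m : ℝ) ≠ 0 := by positivity
      simpa using ((hasDerivAt_id y).add_const (m : ℝ)).log hym
    exact h1.sub h2
  convert key using 1
  rw [Finset.sum_range_succ' (fun m => (y + (m : ℝ))⁻¹) n]
  have s1 : ∑ m ∈ Finset.range n, (y + ((m + 1 : ℕ) : ℝ))⁻¹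
      = ∑ m ∈ Finset.range n, (y + m + 1)⁻¹ :=
    Finset.sum_congr rfl fun m _ => by push_cast; ring_nf
  rw [s1, harmonic_cast, Finset.sum_sub_distrib]
  simp only [Nat.cast_zero, add_zero]
  ring


theorem hasDerivAt_logGamma {x : ℝ} (hx : 0 < x) :
    HasDerivAt (fun y => Real.log (Real.Gamma y)) (psiF x) x := by
  have main := hasDerivAt_of_tendstoLocallyUniformlyOn (l := atTop) (f := fun (n : ℕ) (z : ℝ) =>
      Real.BohrMollerup.logGammaSeq z n)
    (f' := fun (n : ℕ) (y : ℝ) => (Real.log n - (harmonic n : ℚ)) +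
        (-y⁻¹ + ∑ m ∈ Finset.range n, (((m : ℝ) + 1)⁻¹ - (y + m + 1)⁻¹)))
    (g := fun y => Real.log (Real.Gamma y)) (g' := psiF) isOpen_Ioi ?_ ?_ ?_ (mem_Ioi.mpr hx)
  · exact main
  · -- TendstoLocallyUniformlyOn
    rw [tendstoLocallyUniformlyOn_iff_forall_isCompact isOpen_Ioi]
    intro K hKs hK
    rcases hK.bddAbove with ⟨b, hb⟩
    have hbmem : ∀ y ∈ K, 0 < y ∧ y ≤ b := fun y hy => ⟨hKs hy, hb hy⟩
    have U1 : TendstoUniformlyOn (fun (n : ℕ) (_ : ℝ) => Real.log n - ((harmonic n : ℚ) : ℝ))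
        (fun _ => -Real.eulerMascheroniConstant) atTop K :=
      tendsto_log_sub_harmonic.tendstoUniformlyOn_const K
    have U2 : TendstoUniformlyOn
        (fun (n : ℕ) (y : ℝ) => ∑ m ∈ Finset.range n, (((m : ℝ) + 1)⁻¹ - (y + m + 1)⁻¹))
        (fun y => ∑' m : ℕ, (((m : ℝ) + 1)⁻¹ - (y + m + 1)⁻¹)) atTop K := by
      apply tendstoUniformlyOn_tsum_nat (u := fun m => b * (((m : ℝ) + 1) ^ 2)⁻¹)
        (summable_sq_shift.mul_left b)
      intro m y hy
      exact psi_term_bound (hbmem y hy).1 (hbmem y hy).2 m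
    have U3 : TendstoUniformlyOn
        (fun (n : ℕ) (y : ℝ) => -y⁻¹ + ∑ m ∈ Finset.range n, (((m : ℝ) + 1)⁻¹ - (y + m + 1)⁻¹))
        (fun y => -y⁻¹ + ∑' m : ℕ, (((m : ℝ) + 1)⁻¹ - (y + m + 1)⁻¹)) atTop K :=
      TUO_add TUO_self U2
    exact TUO_add U1 U3
  · -- HasDerivAt of the approximants
    filter_upwards with n
    intro y hy
    exact hasDerivAt_logGammaSeq n (mem_Ioi.mp hy)
  · -- pointwise convergence
    intro y hy
    exact Real.BohrMollerup.tendsto_log_gamma (mem_Ioi.mp hy)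

lemma summable_inv_sq_shift {x : ℝ} (hx : 0 < x) :
    Summable fun m : ℕ => ((x + m + 1) ^ 2)⁻¹ := by
  have := (summable_nat_add_iff (f := fun n : ℕ => ((x + n) ^ 2)⁻¹) 1).mpr (summable_inv_sq hx)
  apply this.congr
  intro m
  push_cast
  ring_nf

theorem hasDerivAt_psiF {x : ℝ} (hx : 0 < x) : HasDerivAt psiF (trig x) x := by
  -- derivative of the series part
  have hS : HasDerivAt (fun y : ℝ => ∑' m : ℕ, (((m : ℝ) + 1)⁻¹ - (y + m + 1)⁻¹))
      (∑' m : ℕ, ((x + m + 1) ^ 2)⁻¹) x := by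
    have hsub : x ∈ Ioo (x / 2) (x + 1) := by constructor <;> linarith
    have main := hasDerivAt_of_tendstoUniformlyOn (l := atTop)
      (f := fun (N : ℕ) (y : ℝ) => ∑ m ∈ Finset.range N, (((m : ℝ) + 1)⁻¹ - (y + m + 1)⁻¹))
      (f' := fun (N : ℕ) (y : ℝ) => ∑ m ∈ Finset.range N, ((y + m + 1) ^ 2)⁻¹)
      (g := fun y : ℝ => ∑' m : ℕ, (((m : ℝ) + 1)⁻¹ - (y + m + 1)⁻¹))
      (g' := fun y : ℝ => ∑' m : ℕ, ((y + m + 1) ^ 2)⁻¹) isOpen_Ioo ?_ ?_ ?_ hsub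
    · exact main
    · apply tendstoUniformlyOn_tsum_nat (u := fun m => ((x / 2 + m + 1) ^ 2)⁻¹)
        (by simpa [add_assoc] using summable_inv_sq_shift (by linarith : (0:ℝ) < x / 2))
      intro m y hy
      have h1 : (0:ℝ) < x / 2 + m + 1 := by positivity
      have h2 : x / 2 + m + 1 ≤ y + m + 1 := by have := hy.1; linarith
      rw [Real.norm_eq_abs, abs_of_nonneg (by positivity)]
      apply inv_anti₀ (by positivity)
      nlinarith
    · filter_upwards with N
      intro y hy
      have hy0 : (0:ℝ) < y := lt_trans (by linarith : (0:ℝ) < x/2) hy.1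
      apply HasDerivAt.fun_sum
      intro m _
      have hym : y + (m:ℝ) + 1 ≠ 0 := by positivity
      have base : HasDerivAt (fun z : ℝ => (z + ((m : ℝ) + 1))⁻¹) (-(((y + ((m:ℝ) + 1)) ^ 2)⁻¹)) y := by
        have h := ((hasDerivAt_id y).add_const ((m : ℝ) + 1)).fun_inv (by simp only [id_eq, ← add_assoc]; exact hym)
        simpa [neg_div, one_div] using h
      have goal := (hasDerivAt_const y (((m:ℝ) + 1)⁻¹)).fun_sub base
      simp only [← add_assoc] at goal
      simpa using goal
    · intro y hy
      have hy0 : (0:ℝ) < y := lt_trans (by linarith : (0:ℝ) < x/2) hy.1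
      exact (summable_psi_term hy0).hasSum.tendsto_sum_nat
  -- assemble
  have hinv : HasDerivAt (fun y : ℝ => -y⁻¹) ((x ^ 2)⁻¹) x := by
    simpa using (hasDerivAt_inv hx.ne').fun_neg
  have total := ((hinv.fun_add hS).const_add (-Real.eulerMascheroniConstant))
  have : psiF = fun y : ℝ =>
      -Real.eulerMascheroniConstant + (-y⁻¹ + ∑' m : ℕ, (((m : ℝ) + 1)⁻¹ - (y + m + 1)⁻¹)) := rfl
  rw [this]
  convert total using 1
  · rfl
  · rfl
  -- trig x = (x^2)⁻¹ + ∑' m, ((x+m+1)^2)⁻¹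
  rw [trig, Summable.tsum_eq_zero_add (summable_inv_sq hx)]
  push_cast
  congr 1
  · norm_num
  · apply tsum_congr
    intro m
    push_cast
    ring_nf

theorem hasDerivAt_trig {x : ℝ} (hx : 0 < x) : HasDerivAt trig (-tcube x) x := by
  have hsub : x ∈ Ioo (x / 2) (x + 1) := by constructor <;> linarith
  have main := hasDerivAt_of_tendstoUniformlyOn (l := atTop)
    (f := fun (N : ℕ) (y : ℝ) => ∑ n ∈ Finset.range N, ((y + n) ^ 2)⁻¹)
    (f' := fun (N : ℕ) (y : ℝ) => ∑ n ∈ Finset.range N, -(2 * ((y + n) ^ 3)⁻¹))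
    (g := trig) (g' := fun y : ℝ => ∑' n : ℕ, -(2 * ((y + n) ^ 3)⁻¹)) isOpen_Ioo ?_ ?_ ?_ hsub
  · have main' : HasDerivAt trig (∑' n : ℕ, -(2 * ((x + n) ^ 3)⁻¹)) x := main
    have h2 : ∑' n : ℕ, -(2 * ((x + n) ^ 3)⁻¹) = -tcube x := by
      rw [tcube, ← tsum_neg]
    rwa [h2] at main'
  · apply tendstoUniformlyOn_tsum_nat (u := fun n => 2 * ((x / 2 + n) ^ 3)⁻¹)
      (summable_inv_cube (by linarith : (0:ℝ) < x / 2))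
    intro n y hy
    have h1 : (0:ℝ) < x / 2 + n := by positivity
    have h2 : x / 2 + n ≤ y + n := by have := hy.1; linarith
    have h3 : (0:ℝ) < y + n := lt_of_lt_of_le h1 h2
    rw [Real.norm_eq_abs, abs_neg, abs_of_nonneg (by positivity)]
    apply mul_le_mul_of_nonneg_left _ (by norm_num : (0:ℝ) ≤ 2)
    exact inv_anti₀ (pow_pos h1 3) (pow_le_pow_left₀ h1.le h2 3)
  · filter_upwards with N
    intro y hy
    have hy0 : (0:ℝ) < y := lt_trans (by linarith : (0:ℝ) < x/2) hy.1
    apply HasDerivAt.fun_sum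
    intro n _
    have hyn : (0:ℝ) < y + n := by positivity
    have hpow : HasDerivAt (fun z : ℝ => (z + n) ^ 2) (2 * (y + n)) y := by
      simpa using ((hasDerivAt_id y).add_const (n : ℝ)).fun_pow 2
    have := hpow.fun_inv (by positivity)
    convert this using 1
    · rfl
    have h4 : ((y + n) ^ 2) ^ 2 = (y + n) ^ 3 * (y + n) := by ring
    field_simp
  · intro y hy
    have hy0 : (0:ℝ) < y := lt_trans (by linarith : (0:ℝ) < x/2) hy.1
    exact (summable_inv_sq hy0).hasSum.tendsto_sum_nat

-- generic lower telescope
lemma le_tsum_of_telescope {x : ℝ} (f h : ℝ → ℝ) (hx : 0 < x)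
    (hstep : ∀ y : ℝ, 0 < y → h y - h (y + 1) ≤ f y)
    (hlim : Tendsto (fun N : ℕ => h (x + N)) atTop (𝓝 0))
    (hs : Summable fun n : ℕ => f (x + n))
    (hf : ∀ n : ℕ, 0 ≤ f (x + n)) :
    h x ≤ ∑' n : ℕ, f (x + n) := by
  have key : ∀ N : ℕ, h x ≤ (∑' n : ℕ, f (x + n)) + h (x + N) := by
    intro N
    have tele : ∑ i ∈ Finset.range N, (h (x + (i:ℕ)) - h (x + ((i+1 : ℕ):ℕ)))
        = h (x + ((0:ℕ):ℝ)) - h (x + N) := Finset.sum_range_sub' (fun i : ℕ => h (x + i)) N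
    have hsum : ∑ i ∈ Finset.range N, (h (x + i) - h (x + (i+1 : ℕ))) ≤
        ∑ i ∈ Finset.range N, f (x + i) := by
      apply Finset.sum_le_sum
      intro i _
      have h1 : (0:ℝ) < x + i := by positivity
      have := hstep (x + i) h1
      have e : x + ((i:ℕ) + 1 : ℕ) = (x + i) + 1 := by push_cast; ring
      rw [e]
      exact this
    rw [tele] at hsum
    have h2 : ∑ i ∈ Finset.range N, f (x + i) ≤ ∑' n : ℕ, f (x + n) :=
      Summable.sum_le_tsum _ (fun i _ => hf i) hs
    simp only [Nat.cast_zero, add_zero] at hsum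
    linarith
  have lim2 : Tendsto (fun N : ℕ => (∑' n : ℕ, f (x + n)) + h (x + N)) atTop
      (𝓝 ((∑' n : ℕ, f (x + n)) + 0)) := tendsto_const_nhds.add hlim
  rw [add_zero] at lim2
  exact ge_of_tendsto' lim2 key

-- generic upper telescope
lemma tsum_le_of_telescope {x : ℝ} (f h : ℝ → ℝ) (hx : 0 < x)
    (hstep : ∀ y : ℝ, 0 < y → f y ≤ h y - h (y + 1))
    (hh : ∀ y : ℝ, 0 < y → 0 ≤ h y)
    (hf : ∀ n : ℕ, 0 ≤ f (x + n)) :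
    ∑' n : ℕ, f (x + n) ≤ h x := by
  apply Real.tsum_le_of_sum_range_le hf
  intro N
  have tele : ∑ i ∈ Finset.range N, (h (x + (i:ℕ)) - h (x + ((i+1 : ℕ):ℕ)))
      = h (x + ((0:ℕ):ℝ)) - h (x + N) := Finset.sum_range_sub' (fun i : ℕ => h (x + i)) N
  have hsum : ∑ i ∈ Finset.range N, f (x + i) ≤
      ∑ i ∈ Finset.range N, (h (x + i) - h (x + (i+1 : ℕ))) := by
    apply Finset.sum_le_sum
    intro i _
    have hp : (0:ℝ) < x + i := by positivity
    have := hstep (x + i) hp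
    have e : x + ((i:ℕ) + 1 : ℕ) = (x + i) + 1 := by push_cast; ring
    rw [e]
    exact this
  rw [tele] at hsum
  have h2 : 0 ≤ h (x + N) := hh _ (by positivity)
  simp only [Nat.cast_zero, add_zero] at hsum
  linarith

-- P1 : step inequality for h1
lemma h1_step {y : ℝ} (hy : 0 < y) : h1 y - h1 (y + 1) ≤ ((y + (0:ℝ)) ^ 2)⁻¹ := by
  have hy1 : (0:ℝ) < y + 1 := by linarith
  have hpos : (0:ℝ) < 30 * y ^ 5 * (y + 1) ^ 5 := by positivity
  have hiden : (((y + (0:ℝ)) ^ 2)⁻¹ - (h1 y - h1 (y + 1))) * (30 * y ^ 5 * (y + 1) ^ 5)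
      = 5 * y ^ 2 + 5 * y + 1 := by
    unfold h1
    field_simp
    ring
  nlinarith [hiden, hpos, sq_nonneg y]

-- P2 : step inequality for g0
lemma g0_step {y : ℝ} (hy : 0 < y) : 2 * ((y + (0:ℝ)) ^ 3)⁻¹ ≤ g0 y - g0 (y + 1) := by
  have hy1 : (0:ℝ) < y + 1 := by linarith
  have hpos : (0:ℝ) < 2 * y ^ 4 * (y + 1) ^ 4 := by positivity
  have hiden : ((g0 y - g0 (y + 1)) - 2 * ((y + (0:ℝ)) ^ 3)⁻¹) * (2 * y ^ 4 * (y + 1) ^ 4)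
      = 2 * y + 1 := by
    unfold g0
    field_simp
    ring
  nlinarith [hiden, hpos]

-- step inequality for H0
lemma H0_step {y : ℝ} (hy : 0 < y) : ((y + (0:ℝ)) ^ 2)⁻¹ ≤ H0 y - H0 (y + 1) := by
  have hy1 : (0:ℝ) < y + 1 := by linarith
  have hpos : (0:ℝ) < y ^ 2 * (y + 1) ^ 2 := by positivity
  have hiden : ((H0 y - H0 (y + 1)) - ((y + (0:ℝ)) ^ 2)⁻¹) * (y ^ 2 * (y + 1) ^ 2) = y := by
    unfold H0
    field_simp
    ring
  nlinarith [hiden, hpos]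

lemma g0_nonneg {y : ℝ} (hy : 0 < y) : 0 ≤ g0 y := by unfold g0; positivity
lemma H0_nonneg {y : ℝ} (hy : 0 < y) : 0 ≤ H0 y := by unfold H0; positivity

lemma tendsto_h1_zero {x : ℝ} : Tendsto (fun N : ℕ => h1 (x + N)) atTop (𝓝 0) := by
  have hbase : Tendsto (fun N : ℕ => x + (N:ℝ)) atTop atTop :=
    tendsto_atTop_add_const_left _ x tendsto_natCast_atTop_atTop
  have l1 : Tendsto (fun N : ℕ => (x + (N:ℝ))⁻¹) atTop (𝓝 0) :=
    tendsto_inv_atTop_zero.comp hbase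
  have lpow : ∀ k : ℕ, 0 < k → Tendsto (fun N : ℕ => ((x + (N:ℝ)) ^ k)⁻¹) atTop (𝓝 0) := by
    intro k hk
    exact tendsto_inv_atTop_zero.comp ((tendsto_pow_atTop hk.ne').comp hbase)
  have lc : ∀ (c : ℝ) (k : ℕ), 0 < k → Tendsto (fun N : ℕ => (c * (x + (N:ℝ)) ^ k)⁻¹) atTop (𝓝 0) := by
    intro c k hk
    simp only [mul_inv]
    simpa using (lpow k hk).const_mul c⁻¹
  have := ((l1.add (lc 2 2 (by norm_num))).add (lc 6 3 (by norm_num))).sub (lc 30 5 (by norm_num))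
  simp only [add_zero, sub_zero, zero_add] at this
  exact this.congr (by intro N; rw [h1])

lemma trig_ge_h1 {x : ℝ} (hx : 0 < x) : h1 x ≤ trig x := by
  rw [trig]
  have := le_tsum_of_telescope (fun y => ((y + (0:ℝ))^2)⁻¹) h1 hx
    (fun y hy => h1_step hy) tendsto_h1_zero
    ((summable_inv_sq hx).congr (by intro n; norm_num))
    (fun n => by positivity)
  calc h1 x ≤ ∑' n : ℕ, ((x + n + (0:ℝ)) ^ 2)⁻¹ := this
    _ = ∑' n : ℕ, ((x + n) ^ 2)⁻¹ := by apply tsum_congr; intro n; norm_num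

lemma tcube_le_g0 {x : ℝ} (hx : 0 < x) : tcube x ≤ g0 x := by
  rw [tcube]
  have := tsum_le_of_telescope (fun y => 2 * ((y + (0:ℝ))^3)⁻¹) g0 hx
    (fun y hy => g0_step hy) (fun y hy => g0_nonneg hy)
    (fun n => by positivity)
  calc ∑' n : ℕ, 2 * ((x + n) ^ 3)⁻¹ = ∑' n : ℕ, 2 * ((x + n + (0:ℝ)) ^ 3)⁻¹ := by
        apply tsum_congr; intro n; norm_num
    _ ≤ g0 x := this

lemma trig_le_H0 {x : ℝ} (hx : 0 < x) : trig x ≤ H0 x := by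
  rw [trig]
  have := tsum_le_of_telescope (fun y => ((y + (0:ℝ))^2)⁻¹) H0 hx
    (fun y hy => H0_step hy) (fun y hy => H0_nonneg hy)
    (fun n => by positivity)
  calc ∑' n : ℕ, ((x + n) ^ 2)⁻¹ = ∑' n : ℕ, ((x + n + (0:ℝ)) ^ 2)⁻¹ := by
        apply tsum_congr; intro n; norm_num
    _ ≤ H0 x := this

lemma trig_shift {x : ℝ} (hx : 0 < x) : trig x = (x ^ 2)⁻¹ + trig (x + 1) := by
  rw [trig, Summable.tsum_eq_zero_add (summable_inv_sq hx)]
  congr 1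
  · norm_num
  · rw [trig]
    apply tsum_congr
    intro n
    push_cast
    ring_nf

lemma tcube_shift {x : ℝ} (hx : 0 < x) : tcube x = 2 * (x ^ 3)⁻¹ + tcube (x + 1) := by
  rw [tcube, Summable.tsum_eq_zero_add (summable_inv_cube hx)]
  congr 1
  · norm_num
  · rw [tcube]
    apply tsum_congr
    intro n
    push_cast
    ring_nf

lemma trig_pos {x : ℝ} (hx : 0 < x) : 0 < trig x := by
  rw [trig_shift hx]
  have h2 : 0 ≤ trig (x + 1) := by
    rw [trig]; exact tsum_nonneg (fun n => by positivity)
  have : (0:ℝ) < (x ^ 2)⁻¹ := by positivity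
  linarith

-- P3 : base inequality
lemma h1_sq_gt_g0 {x : ℝ} (hx : 1 ≤ x) : g0 x < h1 x ^ 2 := by
  have hx0 : (0:ℝ) < x := by linarith
  have hpos : (0:ℝ) < 900 * x ^ 10 := by positivity
  have hiden : (h1 x ^ 2 - g0 x) * (900 * x ^ 10)
      = 75 * x ^ 6 + 150 * x ^ 5 - 35 * x ^ 4 - 30 * x ^ 3 - 10 * x ^ 2 + 1 := by
    unfold h1 g0
    field_simp
    ring
  have ht : (0:ℝ) ≤ x - 1 := by linarith
  have hq : (0:ℝ) < 75 * x ^ 6 + 150 * x ^ 5 - 35 * x ^ 4 - 30 * x ^ 3 - 10 * x ^ 2 + 1 := by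
    nlinarith [pow_nonneg ht 6, pow_nonneg ht 5, pow_nonneg ht 4, pow_nonneg ht 3,
      pow_nonneg ht 2, ht]
  nlinarith [hiden, hpos, hq]

lemma h1_nonneg {x : ℝ} (hx : 1 ≤ x) : 0 ≤ h1 x := by
  have hx0 : (0:ℝ) < x := by linarith
  have hpos : (0:ℝ) < 30 * x ^ 5 := by positivity
  have hiden : h1 x * (30 * x ^ 5) = 30 * x ^ 4 + 15 * x ^ 3 + 5 * x ^ 2 - 1 := by
    unfold h1; field_simp; ring
  nlinarith [hiden, hpos]

-- P4
lemma h1_succ_ge {x : ℝ} (hx : 0 < x) : x⁻¹ - (2 * x ^ 2)⁻¹ ≤ h1 (x + 1) := by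
  have hx1 : (0:ℝ) < x + 1 := by linarith
  have hpos : (0:ℝ) < 30 * x ^ 2 * (x + 1) ^ 5 := by positivity
  have hiden : (h1 (x + 1) - (x⁻¹ - (2 * x ^ 2)⁻¹)) * (30 * x ^ 2 * (x + 1) ^ 5)
      = 5 * x ^ 4 + 25 * x ^ 3 + 49 * x ^ 2 + 45 * x + 15 := by
    unfold h1; field_simp; ring
  nlinarith [hiden, hpos, sq_nonneg x, sq_nonneg (x^2), pow_nonneg hx.le 3, pow_nonneg hx.le 4]

-- key inequality
lemma key_aux : ∀ n : ℕ, ∀ x : ℝ, 0 < x → 1 ≤ x + n → tcube x < trig x ^ 2 := by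
  intro n
  induction n with
  | zero =>
      intro x hx h1x
      simp only [Nat.cast_zero, add_zero] at h1x
      calc tcube x ≤ g0 x := tcube_le_g0 hx
        _ < h1 x ^ 2 := h1_sq_gt_g0 h1x
        _ ≤ trig x ^ 2 := by
            have := trig_ge_h1 hx
            have h0 := h1_nonneg h1x
            nlinarith
  | succ n ih =>
      intro x hx hn
      have hx1 : (0:ℝ) < x + 1 := by linarith
      have ih1 : tcube (x + 1) < trig (x + 1) ^ 2 := by
        apply ih (x + 1) hx1
        push_cast at hn ⊢
        linarith
      have hA : x⁻¹ - (2 * x ^ 2)⁻¹ ≤ trig (x + 1) :=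
        le_trans (h1_succ_ge hx) (trig_ge_h1 hx1)
      rw [trig_shift hx, tcube_shift hx]
      set A := trig (x + 1) with hAdef
      have hApos : 0 < A := trig_pos hx1
      have hu : (0:ℝ) < x⁻¹ := by positivity
      have e1 : (x ^ 2)⁻¹ = x⁻¹ ^ 2 := by rw [← inv_pow]
      have e2 : (x ^ 3)⁻¹ = x⁻¹ ^ 3 := by rw [← inv_pow]
      have e3 : (2 * x ^ 2)⁻¹ = x⁻¹ ^ 2 / 2 := by rw [mul_inv, ← inv_pow]; ring
      rw [e1, e2]
      rw [e3] at hA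
      nlinarith [mul_le_mul_of_nonneg_left hA (by positivity : (0:ℝ) ≤ 2 * x⁻¹ ^ 2), ih1, sq_nonneg x⁻¹]

lemma key {x : ℝ} (hx : 0 < x) : tcube x < trig x ^ 2 := by
  obtain ⟨n, hn⟩ := exists_nat_ge (1 - x)
  exact key_aux n x hx (by linarith)

lemma digamma_eq {x : ℝ} (hx : 0 < x) : digamma x = psiF x :=
  (hasDerivAt_logGamma hx).deriv

lemma deriv_digamma {x : ℝ} (hx : 0 < x) : deriv digamma x = trig x := by
  have hev : digamma =ᶠ[𝓝 x] psiF :=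
    Filter.eventuallyEq_of_mem (isOpen_Ioi.mem_nhds (mem_Ioi.mpr hx))
      (fun y hy => digamma_eq (mem_Ioi.mp hy))
  rw [hev.deriv_eq]
  exact (hasDerivAt_psiF hx).deriv

lemma psiF_strictMono : StrictMonoOn psiF (Ioi 0) := by
  apply strictMonoOn_of_deriv_pos (convex_Ioi 0)
  · intro y hy
    exact (hasDerivAt_psiF (mem_Ioi.mp hy)).continuousAt.continuousWithinAt
  · intro y hy
    rw [interior_Ioi] at hy
    rw [(hasDerivAt_psiF (mem_Ioi.mp hy)).deriv]
    exact trig_pos (mem_Ioi.mp hy)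

lemma psiF_lt_log {x : ℝ} (hx : 0 < x) : psiF x < Real.log x := by
  obtain ⟨c, hc, hceq⟩ := exists_hasDerivAt_eq_slope (fun y => Real.log (Real.Gamma y)) psiF
    (by linarith : x < x + 1)
    (fun y hy => (hasDerivAt_logGamma (lt_of_lt_of_le hx hy.1)).continuousAt.continuousWithinAt)
    (fun y hy => hasDerivAt_logGamma (lt_trans hx hy.1))
  have hslope : (Real.log (Real.Gamma (x + 1)) - Real.log (Real.Gamma x)) / (x + 1 - x)
      = Real.log x := by
    rw [Real.Gamma_add_one hx.ne', Real.log_mul hx.ne' (Real.Gamma_pos_of_pos hx).ne']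
    field_simp
    ring
  rw [hslope] at hceq
  rw [← hceq]
  exact psiF_strictMono (mem_Ioi.mpr hx) (mem_Ioi.mpr (lt_trans hx hc.1)) hc.1


lemma hasDerivAt_G {x : ℝ} (hx : 0 < x) :
    HasDerivAt G (-tcube x * Real.exp (psiF x) + trig x * (Real.exp (psiF x) * trig x)) x :=
  (hasDerivAt_trig hx).mul ((hasDerivAt_psiF hx).exp)

lemma G_strictMono : StrictMonoOn G (Ioi 0) := by
  apply strictMonoOn_of_deriv_pos (convex_Ioi 0)
  · intro y hy
    exact (hasDerivAt_G (mem_Ioi.mp hy)).continuousAt.continuousWithinAt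
  · intro y hy
    rw [interior_Ioi] at hy
    have hy0 := mem_Ioi.mp hy
    rw [(hasDerivAt_G hy0).deriv]
    have hkey := key hy0
    have hexp := Real.exp_pos (psiF y)
    have : -tcube y * Real.exp (psiF y) + trig y * (Real.exp (psiF y) * trig y)
        = (trig y ^ 2 - tcube y) * Real.exp (psiF y) := by ring
    rw [this]
    exact mul_pos (by linarith) hexp

lemma G_le {y : ℝ} (hy : 0 < y) : G y ≤ 1 + y⁻¹ := by
  have h1 : Real.exp (psiF y) ≤ y := by
    calc Real.exp (psiF y) ≤ Real.exp (Real.log y) :=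
          Real.exp_le_exp.mpr (psiF_lt_log hy).le
      _ = y := Real.exp_log hy
  have h2 : trig y ≤ y⁻¹ + (y ^ 2)⁻¹ := trig_le_H0 hy
  have h3 : (0:ℝ) < trig y := trig_pos hy
  calc G y = trig y * Real.exp (psiF y) := rfl
    _ ≤ (y⁻¹ + (y ^ 2)⁻¹) * y := by
        apply mul_le_mul h2 h1 (Real.exp_pos _).le (by positivity)
    _ = 1 + y⁻¹ := by field_simp

lemma G_le_one {y : ℝ} (hy : 0 < y) : G y ≤ 1 := by
  have hstep : ∀ n : ℕ, G y ≤ 1 + (y + 1 + n)⁻¹ := by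
    intro n
    have hyn : 0 < y + 1 + (n:ℝ) := by positivity
    have hlt : y < y + 1 + n := by
      have : (0:ℝ) ≤ (n:ℝ) := Nat.cast_nonneg n
      linarith
    exact le_of_lt (lt_of_lt_of_le
      (G_strictMono (mem_Ioi.mpr hy) (mem_Ioi.mpr (lt_trans hy hlt)) hlt) (G_le hyn))
  have hlim : Tendsto (fun n : ℕ => 1 + (y + 1 + (n:ℝ))⁻¹) atTop (𝓝 (1 + 0)) := by
    apply Tendsto.const_add
    exact tendsto_inv_atTop_zero.comp (tendsto_atTop_add_const_left _ (y+1) tendsto_natCast_atTop_atTop)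
  rw [add_zero] at hlim
  exact ge_of_tendsto' hlim hstep

end DigammaAux

open DigammaAux in
theorem trigamma_mul_exp_digamma_lt_one (x : ℝ) (hx : 0 < x) :
    deriv digamma x * Real.exp (digamma x) < 1 := by
  rw [deriv_digamma hx, digamma_eq hx]
  have h1 : G x < G (x + 1) :=
    G_strictMono (Set.mem_Ioi.mpr hx) (Set.mem_Ioi.mpr (by linarith)) (by linarith)
  have h2 : G (x + 1) ≤ 1 := G_le_one (by linarith)
  calc trig x * Real.exp (psiF x) = G x := rfl
    _ < G (x + 1) := h1
    _ ≤ 1 := h2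
end

section
/- Let k be a nonnegative integer, θ > 0 a constant, and a > 0, b > 0 real numbers. Then the inequality Σ_{i=0}^{k} 1/((a+θ)^{i+1}(b+θ)^{k-i+1}) + Σ_{i=0}^{k} 1/(a^{i+1} b^{k-i+1}) > 2 Σ_{i=0}^{k} 1/((a+θ)^{i+1} b^{k-i+1}) holds if b - a > -θ, the reversed strict inequality holds if b - a < -θ, and equality holds if b = a - θ. -/
open Finset


lemma qi_geom (x y : ℝ) (hx : x ≠ 0) (hy : y ≠ 0) (m : ℕ) :
    1/y^m - 1/x^m = (x - y) * ∑ j ∈ range m, 1/(x^(m-j) * y^(j+1)) := by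
  have h := geom_sum₂_mul x y m
  have hs : ∑ j ∈ range m, 1/(x^(m-j) * y^(j+1))
      = (∑ j ∈ range m, x^j * y^(m-1-j)) / (x^m * y^m) := by
    rw [Finset.sum_div]
    refine Finset.sum_congr rfl fun j hj => ?_
    have hj' : j < m := mem_range.mp hj
    rw [div_eq_div_iff (by positivity) (by positivity)]
    have e1 : x^j * x^(m-j) = x^m := by rw [← pow_add]; congr 1; omega
    have e2 : y^(m-1-j) * y^(j+1) = y^m := by rw [← pow_add]; congr 1; omega
    linear_combination (-(y^(m-1-j) * y^(j+1))) * e1 + (-(x^m)) * e2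
  rw [hs]
  have hxm : x^m ≠ 0 := pow_ne_zero _ hx
  have hym : y^m ≠ 0 := pow_ne_zero _ hy
  rw [div_sub_div _ _ hym hxm, ← mul_div_assoc, div_eq_div_iff (by positivity) (by positivity)]
  linear_combination (-(y^m * x^m)) * h

lemma qi_tri' (n : ℕ) (g : ℕ → ℕ → ℝ) :
    ∑ i ∈ range (n+1), ∑ l ∈ range (i+1), g (i-l) l
      = ∑ p ∈ range (n+1), ∑ q ∈ range (n+1-p), g p q := by
  induction n with
  | zero => simp
  | succ n ih =>
    rw [Finset.sum_range_succ, ih]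
    have hlast : ∑ l ∈ range (n+2), g (n+1-l) l
        = ∑ p ∈ range (n+2), g p (n+1-p) := by
      rw [← Finset.sum_range_reflect]
      refine Finset.sum_congr rfl fun l hl => ?_
      have hl' : l < n + 2 := mem_range.mp hl
      congr 1 <;> omega
    rw [hlast]
    rw [Finset.sum_range_succ (f := fun p => ∑ q ∈ range (n+2-p), g p q)]
    have h2 : ∀ p ∈ range (n+1), ∑ q ∈ range (n+2-p), g p q
        = ∑ q ∈ range (n+1-p), g p q + g p (n+1-p) := by
      intro p hp
      have hp' : p < n + 1 := mem_range.mp hp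
      have hnp : n + 2 - p = (n + 1 - p) + 1 := by omega
      rw [hnp, Finset.sum_range_succ]
    rw [Finset.sum_congr rfl h2, Finset.sum_add_distrib,
        Finset.sum_range_succ (f := fun p => g p (n+1-p))]
    have h3 : n + 2 - (n + 1) = 1 := by omega
    rw [h3]
    simp
    ring

lemma qi_main (k : ℕ) (θ a b : ℝ) (ha : 0 < a) (hb : 0 < b)
    (hA : 0 < a + θ) (hB : 0 < b + θ) :
    ∑ i ∈ Finset.range (k + 1), 1 / ((a + θ) ^ (i + 1) * (b + θ) ^ (k - i + 1)) +
      ∑ i ∈ Finset.range (k + 1), 1 / (a ^ (i + 1) * b ^ (k - i + 1)) -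
      2 * ∑ i ∈ Finset.range (k + 1), 1 / ((a + θ) ^ (i + 1) * b ^ (k - i + 1))
    = θ * ∑ p ∈ Finset.range (k + 1), ∑ q ∈ Finset.range (k + 1 - p),
        1 / ((a + θ) ^ (p + 1) * b ^ (k - p - q + 1)) *
          (1 / a ^ (q + 1) - 1 / (b + θ) ^ (q + 1)) := by
  have H1 : ∑ i ∈ Finset.range (k + 1), 1 / ((a + θ) ^ (i + 1) * (b + θ) ^ (k - i + 1)) -
      ∑ i ∈ Finset.range (k + 1), 1 / ((a + θ) ^ (i + 1) * b ^ (k - i + 1))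
      = -θ * ∑ i ∈ Finset.range (k + 1), ∑ j ∈ Finset.range (k - i + 1),
          1 / ((a + θ) ^ (i + 1)) * (1 / (b ^ (k - i + 1 - j) * (b + θ) ^ (j + 1))) := by
    rw [← Finset.sum_sub_distrib, Finset.mul_sum]
    refine Finset.sum_congr rfl fun i hi => ?_
    have h := qi_geom b (b + θ) hb.ne' hB.ne' (k - i + 1)
    have hb2 : b - (b + θ) = -θ := by ring
    rw [hb2] at h
    calc 1 / ((a + θ) ^ (i + 1) * (b + θ) ^ (k - i + 1)) -
          1 / ((a + θ) ^ (i + 1) * b ^ (k - i + 1))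
        = (1 / (a + θ) ^ (i + 1)) *
            (1 / (b + θ) ^ (k - i + 1) - 1 / b ^ (k - i + 1)) := by
          simp only [one_div, mul_inv]; ring
      _ = (1 / (a + θ) ^ (i + 1)) * (-θ * ∑ j ∈ Finset.range (k - i + 1),
            1 / (b ^ (k - i + 1 - j) * (b + θ) ^ (j + 1))) := by rw [h]
      _ = -θ * ((1 / (a + θ) ^ (i + 1)) * ∑ j ∈ Finset.range (k - i + 1),
            1 / (b ^ (k - i + 1 - j) * (b + θ) ^ (j + 1))) := by ring
      _ = -θ * ∑ j ∈ Finset.range (k - i + 1),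
            1 / ((a + θ) ^ (i + 1)) * (1 / (b ^ (k - i + 1 - j) * (b + θ) ^ (j + 1))) := by
          rw [Finset.mul_sum]
  have H2 : ∑ i ∈ Finset.range (k + 1), 1 / (a ^ (i + 1) * b ^ (k - i + 1)) -
      ∑ i ∈ Finset.range (k + 1), 1 / ((a + θ) ^ (i + 1) * b ^ (k - i + 1))
      = θ * ∑ i ∈ Finset.range (k + 1), ∑ l ∈ Finset.range (i + 1),
          1 / ((a + θ) ^ (i + 1 - l) * a ^ (l + 1)) * (1 / b ^ (k - i + 1)) := by
    rw [← Finset.sum_sub_distrib, Finset.mul_sum]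
    refine Finset.sum_congr rfl fun i hi => ?_
    have h := qi_geom (a + θ) a hA.ne' ha.ne' (i + 1)
    have ha2 : a + θ - a = θ := by ring
    rw [ha2] at h
    calc 1 / (a ^ (i + 1) * b ^ (k - i + 1)) -
          1 / ((a + θ) ^ (i + 1) * b ^ (k - i + 1))
        = (1 / a ^ (i + 1) - 1 / (a + θ) ^ (i + 1)) * (1 / b ^ (k - i + 1)) := by
          simp only [one_div, mul_inv]; ring
      _ = (θ * ∑ l ∈ Finset.range (i + 1),
            1 / ((a + θ) ^ (i + 1 - l) * a ^ (l + 1))) * (1 / b ^ (k - i + 1)) := by rw [h]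
      _ = θ * ((∑ l ∈ Finset.range (i + 1),
            1 / ((a + θ) ^ (i + 1 - l) * a ^ (l + 1))) * (1 / b ^ (k - i + 1))) := by ring
      _ = θ * ∑ l ∈ Finset.range (i + 1),
            1 / ((a + θ) ^ (i + 1 - l) * a ^ (l + 1)) * (1 / b ^ (k - i + 1)) := by
          rw [Finset.sum_mul]
  -- put S1 into (p,q) triangle form
  have H3 : ∑ i ∈ Finset.range (k + 1), ∑ l ∈ Finset.range (i + 1),
        1 / ((a + θ) ^ (i + 1 - l) * a ^ (l + 1)) * (1 / b ^ (k - i + 1))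
      = ∑ p ∈ Finset.range (k + 1), ∑ q ∈ Finset.range (k + 1 - p),
        1 / ((a + θ) ^ (p + 1) * a ^ (q + 1)) * (1 / b ^ (k - p - q + 1)) := by
    rw [← qi_tri' k (fun p q => 1 / ((a + θ) ^ (p + 1) * a ^ (q + 1)) * (1 / b ^ (k - p - q + 1)))]
    refine Finset.sum_congr rfl fun i hi => Finset.sum_congr rfl fun l hl => ?_
    have hi' : i < k + 1 := mem_range.mp hi
    have hl' : l < i + 1 := mem_range.mp hl
    have e1 : i + 1 - l = (i - l) + 1 := by omega
    have e2 : k - i + 1 = k - (i - l) - l + 1 := by omega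
    rw [e1, e2]
  -- put S2 into (p,q) form
  have H4 : ∑ i ∈ Finset.range (k + 1), ∑ j ∈ Finset.range (k - i + 1),
        1 / ((a + θ) ^ (i + 1)) * (1 / (b ^ (k - i + 1 - j) * (b + θ) ^ (j + 1)))
      = ∑ p ∈ Finset.range (k + 1), ∑ q ∈ Finset.range (k + 1 - p),
        1 / ((a + θ) ^ (p + 1) * (b + θ) ^ (q + 1)) * (1 / b ^ (k - p - q + 1)) := by
    refine Finset.sum_congr rfl fun i hi => ?_
    have hi' : i < k + 1 := mem_range.mp hi
    have e0 : k - i + 1 = k + 1 - i := by omega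
    rw [e0]
    refine Finset.sum_congr rfl fun j hj => ?_
    have hj' : j < k + 1 - i := mem_range.mp hj
    have e1 : k + 1 - i - j = k - i - j + 1 := by omega
    rw [e1]
    simp only [one_div, mul_inv]; ring
  have H5 : ∑ p ∈ Finset.range (k + 1), ∑ q ∈ Finset.range (k + 1 - p),
        1 / ((a + θ) ^ (p + 1) * a ^ (q + 1)) * (1 / b ^ (k - p - q + 1))
      - ∑ p ∈ Finset.range (k + 1), ∑ q ∈ Finset.range (k + 1 - p),
        1 / ((a + θ) ^ (p + 1) * (b + θ) ^ (q + 1)) * (1 / b ^ (k - p - q + 1))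
      = ∑ p ∈ Finset.range (k + 1), ∑ q ∈ Finset.range (k + 1 - p),
        1 / ((a + θ) ^ (p + 1) * b ^ (k - p - q + 1)) *
          (1 / a ^ (q + 1) - 1 / (b + θ) ^ (q + 1)) := by
    rw [← Finset.sum_sub_distrib]
    refine Finset.sum_congr rfl fun p hp => ?_
    rw [← Finset.sum_sub_distrib]
    refine Finset.sum_congr rfl fun q hq => ?_
    simp only [one_div, mul_inv]; ring
  linear_combination H1 + H2 + θ * H3 - θ * H4 + θ * H5

theorem qi_sum_inequality (k : ℕ) (θ a b : ℝ) (hθ : 0 < θ) (ha : 0 < a) (hb : 0 < b) :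
    (b - a > -θ →
      ∑ i ∈ Finset.range (k + 1), 1 / ((a + θ) ^ (i + 1) * (b + θ) ^ (k - i + 1)) +
          ∑ i ∈ Finset.range (k + 1), 1 / (a ^ (i + 1) * b ^ (k - i + 1)) >
        2 * ∑ i ∈ Finset.range (k + 1), 1 / ((a + θ) ^ (i + 1) * b ^ (k - i + 1))) ∧
    (b - a < -θ →
      ∑ i ∈ Finset.range (k + 1), 1 / ((a + θ) ^ (i + 1) * (b + θ) ^ (k - i + 1)) +
          ∑ i ∈ Finset.range (k + 1), 1 / (a ^ (i + 1) * b ^ (k - i + 1)) <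
        2 * ∑ i ∈ Finset.range (k + 1), 1 / ((a + θ) ^ (i + 1) * b ^ (k - i + 1))) ∧
    (b = a - θ →
      ∑ i ∈ Finset.range (k + 1), 1 / ((a + θ) ^ (i + 1) * (b + θ) ^ (k - i + 1)) +
          ∑ i ∈ Finset.range (k + 1), 1 / (a ^ (i + 1) * b ^ (k - i + 1)) =
        2 * ∑ i ∈ Finset.range (k + 1), 1 / ((a + θ) ^ (i + 1) * b ^ (k - i + 1))) := by
  have hA : 0 < a + θ := by linarith
  have hB : 0 < b + θ := by linarith
  have key := qi_main k θ a b ha hb hA hB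
  refine ⟨fun h1 => ?_, fun h2 => ?_, fun h3 => ?_⟩
  · -- b + θ > a
    have hBa : a < b + θ := by linarith
    have hpos : 0 < ∑ p ∈ Finset.range (k + 1), ∑ q ∈ Finset.range (k + 1 - p),
        1 / ((a + θ) ^ (p + 1) * b ^ (k - p - q + 1)) *
          (1 / a ^ (q + 1) - 1 / (b + θ) ^ (q + 1)) := by
      refine Finset.sum_pos (fun p hp => ?_) nonempty_range_add_one
      have hp' : p < k + 1 := mem_range.mp hp
      refine Finset.sum_pos (fun q hq => ?_) ?_
      · have hpow : a ^ (q + 1) < (b + θ) ^ (q + 1) :=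
          pow_lt_pow_left₀ hBa ha.le (by omega)
        have hsub : 0 < 1 / a ^ (q + 1) - 1 / (b + θ) ^ (q + 1) := by
          have := one_div_lt_one_div_of_lt (pow_pos ha (q + 1)) hpow
          linarith
        have hfac : 0 < 1 / ((a + θ) ^ (p + 1) * b ^ (k - p - q + 1)) := by positivity
        exact mul_pos hfac hsub
      · rw [Finset.nonempty_range_iff]
        omega
    nlinarith [mul_pos hθ hpos]
  · -- b + θ < a
    have hBa : b + θ < a := by linarith
    have hneg : ∑ p ∈ Finset.range (k + 1), ∑ q ∈ Finset.range (k + 1 - p),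
        1 / ((a + θ) ^ (p + 1) * b ^ (k - p - q + 1)) *
          (1 / a ^ (q + 1) - 1 / (b + θ) ^ (q + 1)) < 0 := by
      refine Finset.sum_neg (fun p hp => ?_) nonempty_range_add_one
      have hp' : p < k + 1 := mem_range.mp hp
      refine Finset.sum_neg (fun q hq => ?_) ?_
      · have hpow : (b + θ) ^ (q + 1) < a ^ (q + 1) :=
          pow_lt_pow_left₀ hBa hB.le (by omega)
        have hsub : 1 / a ^ (q + 1) - 1 / (b + θ) ^ (q + 1) < 0 := by
          have := one_div_lt_one_div_of_lt (pow_pos hB (q + 1)) hpow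
          linarith
        have hfac : 0 < 1 / ((a + θ) ^ (p + 1) * b ^ (k - p - q + 1)) := by positivity
        nlinarith
      · rw [Finset.nonempty_range_iff]
        omega
    nlinarith [mul_pos hθ (neg_pos.mpr hneg)]
  · -- b + θ = a
    have hBa : b + θ = a := by rw [h3]; ring
    have hzero : ∑ p ∈ Finset.range (k + 1), ∑ q ∈ Finset.range (k + 1 - p),
        1 / ((a + θ) ^ (p + 1) * b ^ (k - p - q + 1)) *
          (1 / a ^ (q + 1) - 1 / (b + θ) ^ (q + 1)) = 0 := by
      refine Finset.sum_eq_zero fun p hp => Finset.sum_eq_zero fun q hq => ?_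
      rw [hBa, sub_self, mul_zero]
    rw [hzero, mul_zero] at key
    linarith
end
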